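/- Let α be a nonnegative random variable with finite expectation and continuous CDF F, let T ≥ 0, c ≥ 0, and set k = 3T + c, r_H = α_H − k where α_H is the essential supremum of α; assume r_H > 0. Define U(r) = (2/3)·r·E[(α − k − r)⁺]. Then U is continuously differentiable on (0, r_H), and for r ∈ (0, r_H): U(r) = (2/3)·r·m(k + r)·(1 − F(k + r)), and U'(r) = (2/3)·(m(k + r) − r)·(1 − F(k + r)). Consequently every r ∈ (0, r_H) with U'(r) = 0 satisfies r = m(k + r). -/

import Mathlib

open MeasureTheory Set

/-- The cumulative distribution function of a distribution `μ` on `ℝ`. -/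
noncomputable def cdfR (μ : Measure ℝ) (t : ℝ) : ℝ := (μ (Iic t)).toReal

/-- The mean residual lifetime function `m(t) = E[α − t ∣ α > t]` (with value `0` when
`P(α > t) = 0`, using the junk-value convention `x / 0 = 0`). -/
noncomputable def mrl (μ : Measure ℝ) (t : ℝ) : ℝ :=
  (∫ x, max (x - t) 0 ∂μ) / (μ (Ioi t)).toReal

lemma cdfR_continuous (μ : Measure ℝ) [IsProbabilityMeasure μ]
    (hcont : ∀ t : ℝ, μ {t} = 0) : Continuous (cdfR μ) := by
  have heq : cdfR μ = ⇑(ProbabilityTheory.cdf μ) :=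
    funext fun t => (ProbabilityTheory.cdf_eq_real μ t).symm
  rw [heq, continuous_iff_continuousAt]
  intro x
  rw [(ProbabilityTheory.cdf μ).mono.continuousAt_iff_leftLim_eq_rightLim,
    (ProbabilityTheory.cdf μ).rightLim_eq]
  have h1 : (ProbabilityTheory.cdf μ).measure {x} = 0 := by
    rw [ProbabilityTheory.measure_cdf]; exact hcont x
  rw [StieltjesFunction.measure_singleton] at h1
  have h2 := (ProbabilityTheory.cdf μ).mono.leftLim_le (le_refl x)
  have h3 : ProbabilityTheory.cdf μ x - Function.leftLim (⇑(ProbabilityTheory.cdf μ)) x ≤ 0 :=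
    ENNReal.ofReal_eq_zero.mp h1
  linarith

lemma hasDerivAt_g (μ : Measure ℝ) [IsProbabilityMeasure μ] (hint : Integrable id μ)
    (hcont : ∀ t : ℝ, μ {t} = 0) (k s : ℝ) :
    HasDerivAt (fun r : ℝ => ∫ x, max (x - k - r) 0 ∂μ) (-(μ (Ioi (k + s))).toReal) s := by
  have hFint : ∀ r : ℝ, Integrable (fun x => max (x - k - r) 0) μ := by
    intro r
    have h1 : Integrable (fun x : ℝ => x - k - r) μ :=
      (hint.sub (integrable_const k)).sub (integrable_const r)
    exact h1.pos_part
  have meas' : AEStronglyMeasurable ((Ioi (k + s)).indicator fun _ => (-1 : ℝ)) μ :=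
    (measurable_const.indicator measurableSet_Ioi).aestronglyMeasurable
  have lip : ∀ᵐ a ∂μ, LipschitzOnWith (Real.nnabs ((fun _ : ℝ => (1 : ℝ)) a))
      (fun r : ℝ => max (a - k - r) 0) (Metric.ball s 1) := by
    refine Filter.Eventually.of_forall fun a => ?_
    have hL : LipschitzWith 1 (fun r : ℝ => max (a - k - r) 0) := by
      apply LipschitzWith.of_dist_le_mul
      intro x y
      simp only [Real.dist_eq, NNReal.coe_one, one_mul]
      calc |max (a - k - x) 0 - max (a - k - y) 0| ≤ |(a - k - x) - (a - k - y)| :=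
            abs_max_sub_max_le_abs _ _ _
        _ = |x - y| := by rw [show a - k - x - (a - k - y) = -(x - y) by ring, abs_neg]
    have h1 : Real.nnabs ((1 : ℝ)) = 1 := by simp
    rw [h1]
    exact hL.lipschitzOnWith
  have hae : ∀ᵐ a ∂μ, a ≠ k + s := by
    rw [ae_iff]
    simpa using hcont (k + s)
  have diff : ∀ᵐ a ∂μ, HasDerivAt (fun r : ℝ => max (a - k - r) 0)
      ((Ioi (k + s)).indicator (fun _ => (-1 : ℝ)) a) s := by
    filter_upwards [hae] with a ha
    rcases lt_or_gt_of_ne ha with h | h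
    · have hind : (Ioi (k + s)).indicator (fun _ => (-1 : ℝ)) a = 0 :=
        indicator_of_notMem (by simp [mem_Ioi, not_lt, h.le]) _
      rw [hind]
      have hev : (fun r : ℝ => max (a - k - r) 0) =ᶠ[nhds s] fun _ => (0 : ℝ) := by
        filter_upwards [Ioi_mem_nhds (show a - k < s by linarith)] with r hr
        exact max_eq_right (by simp only [mem_Ioi] at hr; linarith)
      exact (hasDerivAt_const s (0 : ℝ)).congr_of_eventuallyEq hev
    · have hind : (Ioi (k + s)).indicator (fun _ => (-1 : ℝ)) a = -1 :=
        indicator_of_mem (by simpa [mem_Ioi] using h) _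
      rw [hind]
      have hd : HasDerivAt (fun r : ℝ => a - k - r) (-1) s := by
        simpa using (hasDerivAt_id s).const_sub (a - k)
      have hev : (fun r : ℝ => max (a - k - r) 0) =ᶠ[nhds s] fun r : ℝ => a - k - r := by
        filter_upwards [Iio_mem_nhds (show s < a - k by linarith)] with r hr
        exact max_eq_left (by simp only [mem_Iio] at hr; linarith)
      exact hd.congr_of_eventuallyEq hev
  have key := hasDerivAt_integral_of_dominated_loc_of_lip (μ := μ)
      (F := fun r x => max (x - k - r) 0) (F' := (Ioi (k + s)).indicator (fun _ => (-1 : ℝ)))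
      (bound := fun _ => (1 : ℝ)) (Metric.ball_mem_nhds s one_pos)
      (Filter.Eventually.of_forall fun r => (hFint r).aestronglyMeasurable) (hFint s)
      meas' lip (integrable_const 1) diff
  have hI : ∫ a, (Ioi (k + s)).indicator (fun _ => (-1 : ℝ)) a ∂μ
      = -(μ (Ioi (k + s))).toReal := by
    rw [integral_indicator_const (-1 : ℝ) measurableSet_Ioi]
    simp [mul_comm, measureReal_def]
  rw [hI] at key
  exact key.2

/-- With `k = 3T + c` and `r_H = α_H − k > 0`, the supplier payoff
`U(r) = (2/3)·r·E[(α − k − r)⁺]` is continuously differentiable on `(0, r_H)`, where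
`U(r) = (2/3)·r·m(k+r)·(1 − F(k+r))` and `U'(r) = (2/3)·(m(k+r) − r)·(1 − F(k+r))`;
hence every critical point `r ∈ (0, r_H)` of `U` satisfies `r = m(k + r)`. -/
theorem stmt7 (μ : Measure ℝ) [IsProbabilityMeasure μ]
    (hnonneg : μ (Iio 0) = 0) (hint : Integrable id μ) (hcont : ∀ t : ℝ, μ {t} = 0)
    (T c : ℝ) (hT : 0 ≤ T) (hc : 0 ≤ c) (k : ℝ) (hk : k = 3*T + c)
    (rH : EReal) (hrH : rH = essSup (fun x : ℝ => (x : EReal)) μ - (k : EReal))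
    (hrHpos : 0 < rH)
    (U : ℝ → ℝ) (hU : ∀ r : ℝ, U r = (2/3) * r * ∫ x, max (x - k - r) 0 ∂μ) :
    (∀ r : ℝ, 0 < r → (r : EReal) < rH →
      U r = (2/3) * r * mrl μ (k + r) * (1 - cdfR μ (k + r))) ∧
    (∀ r : ℝ, 0 < r → (r : EReal) < rH →
      HasDerivAt U ((2/3) * (mrl μ (k + r) - r) * (1 - cdfR μ (k + r))) r) ∧
    ContinuousOn (fun r : ℝ => (2/3) * (mrl μ (k + r) - r) * (1 - cdfR μ (k + r)))
      {r : ℝ | 0 < r ∧ (r : EReal) < rH} ∧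
    (∀ r : ℝ, 0 < r → (r : EReal) < rH → deriv U r = 0 → r = mrl μ (k + r)) := by
  have h1F : ∀ t : ℝ, 1 - cdfR μ t = (μ (Ioi t)).toReal := by
    intro t
    have h : μ (Ioi t) = 1 - μ (Iic t) := by
      rw [← compl_Iic]; exact prob_compl_eq_one_sub measurableSet_Iic
    rw [h, ENNReal.toReal_sub_of_le prob_le_one (by simp)]
    simp [cdfR]
  have hIoi : ∀ r : ℝ, (r : EReal) < rH → 0 < (μ (Ioi (k + r))).toReal := by
    intro r hr
    refine ENNReal.toReal_pos (fun h0 => ?_) (measure_ne_top μ _)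
    have hae : ∀ᵐ x : ℝ ∂μ, (x : EReal) ≤ ((k + r : ℝ) : EReal) := by
      rw [ae_iff]
      have hset : {x : ℝ | ¬ (x : EReal) ≤ ((k + r : ℝ) : EReal)} = Ioi (k + r) := by
        ext x; simp [not_le, ← EReal.coe_add, EReal.coe_lt_coe_iff]
      rw [hset]; exact h0
    have h1 : essSup (fun x : ℝ => (x : EReal)) μ ≤ ((k + r : ℝ) : EReal) :=
      essSup_le_of_ae_le _ hae
    have h2 : (r : EReal) < essSup (fun x : ℝ => (x : EReal)) μ - (k : EReal) := by
      rw [← hrH]; exact hr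
    have h3 := EReal.add_lt_of_lt_sub h2
    have hfin : ((k + r : ℝ) : EReal) < ((k + r : ℝ) : EReal) := by
      calc ((k + r : ℝ) : EReal) = (r : EReal) + (k : EReal) := by
            rw [← EReal.coe_add]; norm_num [add_comm]
        _ < essSup (fun x : ℝ => (x : EReal)) μ := h3
        _ ≤ ((k + r : ℝ) : EReal) := h1
    exact absurd hfin (lt_irrefl _)
  have hmul : ∀ r : ℝ, (μ (Ioi (k + r))).toReal ≠ 0 →
      mrl μ (k + r) * (μ (Ioi (k + r))).toReal = ∫ x, max (x - k - r) 0 ∂μ := by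
    intro r h
    unfold mrl
    rw [div_mul_cancel₀ _ h]
    simp only [← sub_sub]
  have part1 : ∀ r : ℝ, 0 < r → (r : EReal) < rH →
      U r = (2/3) * r * mrl μ (k + r) * (1 - cdfR μ (k + r)) := by
    intro r hr hlt
    rw [hU r, h1F (k + r), ← hmul r (hIoi r hlt).ne']
    ring
  have part2 : ∀ r : ℝ, 0 < r → (r : EReal) < rH →
      HasDerivAt U ((2/3) * (mrl μ (k + r) - r) * (1 - cdfR μ (k + r))) r := by
    intro r hr hlt
    have h1 : HasDerivAt (fun r : ℝ => (2/3 : ℝ) * r) (2/3) r := by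
      simpa using (hasDerivAt_id r).const_mul (2/3 : ℝ)
    have hd := h1.mul (hasDerivAt_g μ hint hcont k r)
    have hUeq : U = fun r => (2/3 : ℝ) * r * ∫ x, max (x - k - r) 0 ∂μ := funext hU
    rw [hUeq]
    refine hd.congr_deriv (Eq.symm ?_)
    have hm := hmul r (hIoi r hlt).ne'
    rw [h1F]
    linear_combination (2/3 : ℝ) * hm
  have hg_cont : Continuous (fun r : ℝ => ∫ x, max (x - k - r) 0 ∂μ) := by
    rw [continuous_iff_continuousAt]
    exact fun r => (hasDerivAt_g μ hint hcont k r).continuousAt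
  have hF_cont : Continuous fun r : ℝ => 1 - cdfR μ (k + r) :=
    continuous_const.sub ((cdfR_continuous μ hcont).comp (continuous_const.add continuous_id))
  have hmrl_cont : ContinuousOn (fun r : ℝ => mrl μ (k + r))
      {r : ℝ | 0 < r ∧ (r : EReal) < rH} := by
    have heq : ∀ r ∈ {r : ℝ | 0 < r ∧ (r : EReal) < rH},
        (fun r : ℝ => (∫ x, max (x - k - r) 0 ∂μ) / (1 - cdfR μ (k + r))) r = mrl μ (k + r) := by
      intro r hr
      simp only [mrl, h1F (k + r), sub_sub]
    refine ContinuousOn.congr ?_ fun r hr => (heq r hr).symm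
    exact hg_cont.continuousOn.div hF_cont.continuousOn
      (fun r hr => by rw [h1F]; exact (hIoi r hr.2).ne')
  refine ⟨part1, part2, ?_, ?_⟩
  · exact (continuousOn_const.mul (hmrl_cont.sub continuousOn_id)).mul hF_cont.continuousOn
  · intro r hr hlt h0
    have h2 := (part2 r hr hlt).deriv
    rw [h0, h1F] at h2
    have ht := (hIoi r hlt).ne'
    have h3 : (2/3 : ℝ) * (mrl μ (k + r) - r) = 0 := by
      rcases mul_eq_zero.mp h2.symm with h | h
      · exact h
      · exact absurd h ht
    have : mrl μ (k + r) - r = 0 := by linarith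
    linarith
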